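/- Let 2 ≤ q < ∞ and let Z be a Banach space which is uniformly convex of power type q with constant δ ∈ (0,1]. Let Y ⊆ Z be a closed subspace, let Q : Z → Z be a linear contraction whose range is contained in Y and which satisfies Qy = y for all y ∈ Y (a contractive projection onto Y), and let P : Z → Z be a linear contractive projection (P² = P and ‖P‖ ≤ 1). Define T : Y → Y by Ty = Q(Py). Then ‖I_Y − T‖ ≤ 2 − ε, where ε := (2δ/(1+2δ))·(1/q). -/

import Mathlib

/-- A normed space is uniformly convex of power type `q` with constant `δ` if
`‖(x+y)/2‖^q + δ ‖(x-y)/2‖^q ≤ (‖x‖^q + ‖y‖^q)/2` for all `x, y`. -/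
def UniformlyConvexPow (Z : Type*) [NormedAddCommGroup Z] [NormedSpace ℝ Z]
    (q δ : ℝ) : Prop :=
  ∀ x y : Z, ‖(2 : ℝ)⁻¹ • (x + y)‖ ^ q + δ * ‖(2 : ℝ)⁻¹ • (x - y)‖ ^ q ≤
    (‖x‖ ^ q + ‖y‖ ^ q) / 2

private lemma bern {q t : ℝ} (hq : 1 ≤ q) (ht : t ≤ 1) : 1 - q * t ≤ (1 - t) ^ q := by
  have := one_add_mul_self_le_rpow_one_add (s := -t) (by linarith) hq
  simpa [sub_eq_add_neg, mul_neg] using this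

private lemma key_real {q δ c a b : ℝ} (hq : 2 ≤ q) (hδ0 : 0 < δ) (hδ1 : δ ≤ 1)
    (hc : 0 ≤ c) (hb : 0 ≤ b) (ha : 0 ≤ a)
    (h1 : (a / 2) ^ q + δ * b ^ q ≤ c ^ q) (h2 : a ≤ c + b) :
    a ≤ (2 - 2 * δ / (1 + 2 * δ) * (1 / q)) * c := by
  set ε := 2 * δ / (1 + 2 * δ) * (1 / q) with hε
  have hq0 : (0:ℝ) < q := by linarith
  have hd : (0:ℝ) < 1 + 2 * δ := by linarith
  have hfrac : 2 * δ / (1 + 2 * δ) ≤ 1 := by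
    rw [div_le_one hd]; linarith
  have hfrac0 : 0 < 2 * δ / (1 + 2 * δ) := by positivity
  have hε0 : 0 < ε := by positivity
  have hεhalf : ε ≤ 1 / 2 := by
    have h1q : 1 / q ≤ 1 / 2 := by
      apply div_le_div_of_nonneg_left <;> linarith
    calc ε ≤ 1 * (1 / q) := by
            exact mul_le_mul_of_nonneg_right hfrac (by positivity)
      _ ≤ 1 / 2 := by linarith
  have hqε : q * ε = 2 * δ / (1 + 2 * δ) := by
    rw [hε, one_div, mul_comm q, mul_assoc, inv_mul_cancel₀ hq0.ne', mul_one]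
  -- key numeric inequality
  have hkey : 1 ≤ (1 - ε / 2) ^ q + δ * (1 - ε) ^ q := by
    have b1 : 1 - q * (ε / 2) ≤ (1 - ε / 2) ^ q := bern (by linarith) (by linarith)
    have b2 : 1 - q * ε ≤ (1 - ε) ^ q := bern (by linarith) (by linarith)
    have b2' : δ * (1 - q * ε) ≤ δ * (1 - ε) ^ q :=
      mul_le_mul_of_nonneg_left b2 hδ0.le
    have : 1 - q * (ε / 2) + δ * (1 - q * ε) = 1 + δ - (q * ε) * (1 / 2 + δ) := by ring
    have heq : (q * ε) * (1 / 2 + δ) = δ := by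
      rw [hqε]; field_simp
    nlinarith
  by_contra hcon
  push_neg at hcon
  have hεc : ε ≤ 2 := by linarith
  rcases eq_or_lt_of_le hc with rfl | hc0
  · -- c = 0 case
    simp only [mul_zero] at hcon
    have : (0:ℝ) < (a / 2) ^ q := Real.rpow_pos_of_pos (by linarith) q
    have hc0 : (0:ℝ) ^ q = 0 := Real.zero_rpow hq0.ne'
    nlinarith [Real.rpow_nonneg hb q]
  · have hac : (2 - ε) * c < a := hcon
    have hbig : (1 - ε) * c < b := by nlinarith
    have h1q : ((2 - ε) * c / 2) ^ q < (a / 2) ^ q := by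
      apply Real.rpow_lt_rpow (by nlinarith) _ hq0
      linarith
    have h2q : ((1 - ε) * c) ^ q < b ^ q := by
      apply Real.rpow_lt_rpow (by nlinarith) hbig hq0
    have e1 : ((2 - ε) * c / 2) ^ q = (1 - ε / 2) ^ q * c ^ q := by
      rw [show (2 - ε) * c / 2 = (1 - ε / 2) * c by ring,
        Real.mul_rpow (by linarith) hc]
    have e2 : ((1 - ε) * c) ^ q = (1 - ε) ^ q * c ^ q := by
      rw [Real.mul_rpow (by linarith) hc]
    have hcq : 0 < c ^ q := Real.rpow_pos_of_pos hc0 q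
    nlinarith [mul_le_mul_of_nonneg_right hkey hcq.le,
      mul_lt_mul_of_pos_left h2q hδ0]

/-- Abstract form of the key contraction lemma: if `Z` is uniformly convex of
power type `q` with constant `δ ∈ (0,1]`, `Y ⊆ Z` is a closed subspace,
`Q` is a contractive projection of `Z` onto `Y`, `P` is a contractive projection
on `Z`, and `T : Y → Y` is `y ↦ Q (P y)`, then
`‖I_Y - T‖ ≤ 2 - ε` with `ε = (2δ/(1+2δ)) · (1/q)`. -/
theorem stmt8 (Z : Type*) [NormedAddCommGroup Z] [NormedSpace ℝ Z] [CompleteSpace Z]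
    (q δ : ℝ) (hq : 2 ≤ q) (hδ : δ ∈ Set.Ioc (0 : ℝ) 1)
    (hZ : UniformlyConvexPow Z q δ)
    (Y : Submodule ℝ Z) (hY : IsClosed (Y : Set Z))
    (Q P : Z →L[ℝ] Z)
    (hQ1 : ‖Q‖ ≤ 1) (hQran : ∀ z : Z, Q z ∈ Y) (hQfix : ∀ y ∈ Y, Q y = y)
    (hP1 : ‖P‖ ≤ 1) (hPproj : P.comp P = P)
    (T : Y →L[ℝ] Y) (hT : ∀ y : Y, (T y : Z) = Q (P (y : Z))) :
    ‖ContinuousLinearMap.id ℝ Y - T‖ ≤ 2 - 2 * δ / (1 + 2 * δ) * (1 / q) := by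
  obtain ⟨hδ0, hδ1⟩ := hδ
  have hq0 : (0:ℝ) < q := by linarith
  have hd : (0:ℝ) < 1 + 2 * δ := by linarith
  have hbound : (0:ℝ) ≤ 2 - 2 * δ / (1 + 2 * δ) * (1 / q) := by
    have h1 : 2 * δ / (1 + 2 * δ) ≤ 1 := by rw [div_le_one hd]; linarith
    have h2 : 1 / q ≤ 1 / 2 := by
      apply div_le_div_of_nonneg_left <;> linarith
    nlinarith [mul_le_mul_of_nonneg_right h1 (le_of_lt (by positivity : (0:ℝ) < 1/q))]
  apply ContinuousLinearMap.opNorm_le_bound _ hbound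
  intro y
  set z := (y : Z) with hz
  have hPP : P (P z) = P z := by
    have := ContinuousLinearMap.ext_iff.mp hPproj z
    simpa using this
  -- the vector (id - T) y coerces to z - Q (P z)
  have hcoe : ‖ContinuousLinearMap.id ℝ Y y - T y‖ = ‖z - Q (P z)‖ := by
    rw [show ‖ContinuousLinearMap.id ℝ Y y - T y‖ = ‖((ContinuousLinearMap.id ℝ Y y - T y : Y) : Z)‖ from rfl]
    simp [hT y]; rfl
  have hQcontr : ∀ w : Z, ‖Q w‖ ≤ ‖w‖ := fun w => by
    calc ‖Q w‖ ≤ ‖Q‖ * ‖w‖ := Q.le_opNorm w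
      _ ≤ 1 * ‖w‖ := mul_le_mul_of_nonneg_right hQ1 (norm_nonneg w)
      _ = ‖w‖ := one_mul _
  have hPcontr : ∀ w : Z, ‖P w‖ ≤ ‖w‖ := fun w => by
    calc ‖P w‖ ≤ ‖P‖ * ‖w‖ := P.le_opNorm w
      _ ≤ 1 * ‖w‖ := mul_le_mul_of_nonneg_right hP1 (norm_nonneg w)
      _ = ‖w‖ := one_mul _
  have hstep1 : ‖z - Q (P z)‖ ≤ ‖z - P z‖ := by
    have hQz : Q z = z := hQfix z y.2
    have : z - Q (P z) = Q (z - P z) := by rw [map_sub, hQz]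
    rw [this]; exact hQcontr _
  set a := ‖z - P z‖ with haa
  set b := ‖P z‖ with hbb
  set c := ‖z‖ with hcc
  -- b ≤ ‖2⁻¹ • (z + P z)‖
  have hbmid : b ≤ ‖(2:ℝ)⁻¹ • (z + P z)‖ := by
    have : P ((2:ℝ)⁻¹ • (z + P z)) = P z := by
      rw [map_smul, map_add, hPP]
      rw [smul_add]
      module
    calc b = ‖P ((2:ℝ)⁻¹ • (z + P z))‖ := by rw [this]
      _ ≤ ‖(2:ℝ)⁻¹ • (z + P z)‖ := hPcontr _
  have hconv := hZ z (-(P z))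
  have e1 : z + -(P z) = z - P z := by abel
  have e2 : z - -(P z) = z + P z := by abel
  rw [e1, e2, norm_neg] at hconv
  have e3 : ‖(2:ℝ)⁻¹ • (z - P z)‖ = a / 2 := by
    rw [norm_smul]; simp [haa]; ring
  rw [e3] at hconv
  have hbq : b ^ q ≤ ‖(2:ℝ)⁻¹ • (z + P z)‖ ^ q :=
    Real.rpow_le_rpow (norm_nonneg _) hbmid hq0.le
  have hbc : b ≤ c := hPcontr z
  have hbcq : b ^ q ≤ c ^ q := Real.rpow_le_rpow (norm_nonneg _) hbc hq0.le
  have h1 : (a / 2) ^ q + δ * b ^ q ≤ c ^ q := by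
    have := mul_le_mul_of_nonneg_left hbq hδ0.le
    nlinarith
  have h2 : a ≤ c + b := norm_sub_le z (P z)
  have := key_real hq hδ0 hδ1 (norm_nonneg z) (norm_nonneg _) (norm_nonneg _) h1 h2
  calc ‖(ContinuousLinearMap.id ℝ Y - T) y‖ = ‖z - Q (P z)‖ := by
        rw [ContinuousLinearMap.sub_apply]; exact hcoe
    _ ≤ a := hstep1
    _ ≤ (2 - 2 * δ / (1 + 2 * δ) * (1 / q)) * c := this
    _ = (2 - 2 * δ / (1 + 2 * δ) * (1 / q)) * ‖y‖ := by rw [hcc]; rfl
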